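/- Let F : EuclideanSpace ℝ (Fin d) → ℝ be differentiable with ∇F L-Lipschitz and F bounded below. Let (η_k)_{k≥0} be positive step sizes with Σ_{k=0}^{∞} η_k = ∞ and Σ_{k=0}^{∞} η_k² < ∞. Let (w_k)_{k≥0} and (g_k)_{k≥0} be sequences in EuclideanSpace ℝ (Fin d) with w_{k+1} = w_k − η_k·g_k for all k, and suppose there exist constants G > 0, c > 0, and R > 0 such that for all k: ‖g_k‖ ≤ G, ⟨g_k, ∇F(w_k)⟩ ≥ c·‖∇F(w_k)‖², and ‖w_k‖ ≤ R. Then ∇F(w_k) → 0 as k → ∞. -/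

import Mathlib

open RealInnerProductSpace

section Aux

variable {E : Type*} [NormedAddCommGroup E] [InnerProductSpace ℝ E] [CompleteSpace E]

/-- Derivative of a real function along a line, via the gradient. -/
lemma licm_line_hasDerivAt (F : E → ℝ) (hF : Differentiable ℝ F) (x v : E) (t : ℝ) :
    HasDerivAt (fun s : ℝ => F (x + s • v)) ⟪gradient F (x + t • v), v⟫ t := by
  have hline : HasDerivAt (fun s : ℝ => x + s • v) v t := by
    simpa using (((hasDerivAt_id t).smul_const v).const_add x)
  have hg := (hF (x + t • v)).hasGradientAt
  have hf := hg.hasFDerivAt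
  have := hf.comp_hasDerivAt t hline
  simpa [InnerProductSpace.toDual_apply_apply, Function.comp_def] using this

/-- Descent lemma for functions with Lipschitz gradient. -/
lemma licm_descent (F : E → ℝ) (L : ℝ) (hL : 0 ≤ L) (hF : Differentiable ℝ F)
    (hLip : ∀ x y : E, ‖gradient F x - gradient F y‖ ≤ L * ‖x - y‖) (x v : E) :
    F (x + v) ≤ F x + ⟪gradient F x, v⟫ + L / 2 * ‖v‖ ^ 2 := by
  set φ : ℝ → ℝ := fun t => F (x + t • v) - t * ⟪gradient F x, v⟫
      - L / 2 * ‖v‖ ^ 2 * t ^ 2 with hφdef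
  have hφ : ∀ t : ℝ, HasDerivAt φ
      (⟪gradient F (x + t • v), v⟫ - ⟪gradient F x, v⟫ - L / 2 * ‖v‖ ^ 2 * (2 * t)) t := by
    intro t
    have h1 := licm_line_hasDerivAt F hF x v t
    have h2 : HasDerivAt (fun s : ℝ => s * ⟪gradient F x, v⟫) ⟪gradient F x, v⟫ t := by
      simpa using (hasDerivAt_id t).mul_const ⟪gradient F x, v⟫
    have h3 : HasDerivAt (fun s : ℝ => L / 2 * ‖v‖ ^ 2 * s ^ 2)
        (L / 2 * ‖v‖ ^ 2 * (2 * t)) t := by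
      have h := (hasDerivAt_pow 2 t).const_mul (L / 2 * ‖v‖ ^ 2)
      norm_num at h
      convert h using 1
    exact (h1.sub h2).sub h3
  have hdiff : Differentiable ℝ φ := fun t => (hφ t).differentiableAt
  have hanti : AntitoneOn φ (Set.Icc (0 : ℝ) 1) := by
    apply antitoneOn_of_deriv_nonpos (convex_Icc 0 1) hdiff.continuous.continuousOn
      hdiff.differentiableOn
    intro t ht
    rw [interior_Icc] at ht
    rw [(hφ t).deriv]
    have hineq : ⟪gradient F (x + t • v) - gradient F x, v⟫
        ≤ L * t * ‖v‖ ^ 2 := by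
      calc ⟪gradient F (x + t • v) - gradient F x, v⟫
          ≤ ‖gradient F (x + t • v) - gradient F x‖ * ‖v‖ := real_inner_le_norm _ _
        _ ≤ (L * ‖(x + t • v) - x‖) * ‖v‖ := by
            apply mul_le_mul_of_nonneg_right (hLip _ _) (norm_nonneg _)
        _ = L * t * ‖v‖ ^ 2 := by
            rw [add_sub_cancel_left, norm_smul, Real.norm_eq_abs, abs_of_pos ht.1]
            ring
    rw [inner_sub_left] at hineq
    nlinarith [ht.1.le]
  have h01 := hanti (Set.left_mem_Icc.mpr (by norm_num)) (Set.right_mem_Icc.mpr (by norm_num))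
    (by norm_num)
  simp only [hφdef, one_smul, zero_smul, add_zero, one_pow, one_mul, zero_pow, mul_zero,
    zero_mul, sub_zero] at h01
  linarith

/-- Robbins–Monro style deterministic lemma: if `Σ η_k = ∞`, `Σ η_k a_k < ∞`,
`a_k ≥ 0` and `|a_{k+1} - a_k| ≤ C η_k`, then `a_k → 0`. -/
lemma licm_robbins (η a : ℕ → ℝ) (hη : ∀ k, 0 < η k) (ha : ∀ k, 0 ≤ a k)
    (hdiv : Filter.Tendsto (fun n => ∑ k ∈ Finset.range n, η k) Filter.atTop Filter.atTop)
    (hsum : Summable (fun k => η k * a k))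
    (C : ℝ) (hC : 0 < C) (hstep : ∀ k, |a (k + 1) - a k| ≤ C * η k) :
    Filter.Tendsto a Filter.atTop (nhds 0) := by
  classical
  by_contra hcon
  rw [Metric.tendsto_atTop] at hcon
  push_neg at hcon
  obtain ⟨ε, hε, hfreq⟩ := hcon
  set S : ℕ → ℝ := fun n => ∑ k ∈ Finset.range n, η k * a k with hS
  have hcauchy : CauchySeq S := (hsum.hasSum.tendsto_sum_nat).cauchySeq
  set δ : ℝ := ε / (2 * C) with hδ
  have hδpos : 0 < δ := div_pos hε (by positivity)
  obtain ⟨N₁, hN₁⟩ := Metric.cauchySeq_iff'.mp hcauchy (ε * δ / 4) (by positivity)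
  obtain ⟨n, hnN, hna⟩ := hfreq N₁
  rw [Real.dist_eq, sub_zero, abs_of_nonneg (ha n)] at hna
  -- find first index past n where the η-mass reaches δ
  have hex : ∃ j, δ ≤ ∑ k ∈ Finset.Ico n j, η k ∧ n < j := by
    have h1 : ∀ᶠ j in Filter.atTop,
        δ + ∑ k ∈ Finset.range n, η k ≤ ∑ k ∈ Finset.range j, η k :=
      Filter.tendsto_atTop.mp hdiv _
    obtain ⟨j, hj1, hj2⟩ := (h1.and (Filter.eventually_ge_atTop (n + 1))).exists
    refine ⟨j, ?_, hj2⟩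
    rw [Finset.sum_Ico_eq_sub _ (by omega : n ≤ j)]
    linarith
  set m : ℕ := Nat.find hex with hm
  obtain ⟨hmδ, hmn⟩ : δ ≤ ∑ k ∈ Finset.Ico n m, η k ∧ n < m := Nat.find_spec hex
  have hprev : ∑ k ∈ Finset.Ico n (m - 1), η k < δ := by
    have hmin := Nat.find_min hex (show m - 1 < m by omega)
    rcases Nat.lt_or_ge n (m - 1) with h | h
    · push_neg at hmin
      by_contra hcontra
      push_neg at hcontra
      exact absurd h (by simpa using hmin hcontra)
    · have : m - 1 = n ∨ m - 1 < n := by omega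
      have hIco : Finset.Ico n (m - 1) = ∅ := Finset.Ico_eq_empty (by omega)
      rw [hIco, Finset.sum_empty]
      exact hδpos
  -- on [n, m-1] the sequence stays above ε/2
  have hlow : ∀ j, n ≤ j → a n - C * ∑ k ∈ Finset.Ico n j, η k ≤ a j := by
    intro j hj
    induction j, hj using Nat.le_induction with
    | base => simp
    | succ j hj ih =>
      have h1 : a j - C * η j ≤ a (j + 1) := by
        have := abs_le.mp (hstep j)
        linarith [this.1]
      rw [Finset.sum_Ico_succ_top hj]
      linarith
  have hhalf : ∀ j ∈ Finset.Ico n m, ε / 2 ≤ a j := by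
    intro j hj
    rw [Finset.mem_Ico] at hj
    have hsub : ∑ k ∈ Finset.Ico n j, η k ≤ ∑ k ∈ Finset.Ico n (m - 1), η k := by
      apply Finset.sum_le_sum_of_subset_of_nonneg
      · exact Finset.Ico_subset_Ico le_rfl (by omega)
      · intro k _ _; exact (hη k).le
    have hTj : ∑ k ∈ Finset.Ico n j, η k < δ := lt_of_le_of_lt hsub hprev
    have := hlow j hj.1
    have hCδ : C * δ = ε / 2 := by
      rw [hδ]; field_simp
    nlinarith [hη j, mul_le_mul_of_nonneg_left hTj.le hC.le]
  -- contradiction with Cauchy property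
  have hsumlow : ε / 2 * δ ≤ ∑ k ∈ Finset.Ico n m, η k * a k := by
    calc ε / 2 * δ ≤ ε / 2 * ∑ k ∈ Finset.Ico n m, η k := by
          apply mul_le_mul_of_nonneg_left hmδ (by positivity)
      _ = ∑ k ∈ Finset.Ico n m, ε / 2 * η k := by rw [Finset.mul_sum]
      _ ≤ ∑ k ∈ Finset.Ico n m, η k * a k := by
          apply Finset.sum_le_sum
          intro k hk
          rw [mul_comm (η k) (a k)]
          exact mul_le_mul_of_nonneg_right (hhalf k hk) (hη k).le
  have hdiffS : S m - S n = ∑ k ∈ Finset.Ico n m, η k * a k := by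
    rw [hS]; exact (Finset.sum_Ico_eq_sub _ hmn.le).symm
  have hd1 := hN₁ m (le_trans hnN hmn.le)
  have hd2 := hN₁ n hnN
  rw [Real.dist_eq] at hd1 hd2
  have ha1 := le_abs_self (S m - S N₁)
  have ha2 := neg_abs_le (S n - S N₁)
  have heq : ε / 2 * δ = ε * δ / 2 := by ring
  linarith [hsumlow, hdiffS]

end Aux

/-- Deterministic analog of Theorem 2 (almost sure convergence of LICM-SGD):
under bounded-below `F` with Lipschitz gradient, step sizes with `Σ η_k = ∞` and
`Σ η_k² < ∞`, bounded iterates and update directions making sufficiently positive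
inner products with the true gradients, the gradients converge to zero. -/
theorem licm_sgd_gradient_tendsto_zero
    (d : ℕ) (F : EuclideanSpace ℝ (Fin d) → ℝ) (L : ℝ)
    (hF : Differentiable ℝ F)
    (hLip : ∀ x y : EuclideanSpace ℝ (Fin d),
      ‖gradient F x - gradient F y‖ ≤ L * ‖x - y‖)
    (hbdd : BddBelow (Set.range F))
    (η : ℕ → ℝ) (hηpos : ∀ k, 0 < η k)
    (hdiv : Filter.Tendsto (fun n => ∑ k ∈ Finset.range n, η k)
      Filter.atTop Filter.atTop)
    (hsq : Summable (fun k => (η k) ^ 2))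
    (w g : ℕ → EuclideanSpace ℝ (Fin d))
    (hupd : ∀ k, w (k + 1) = w k - η k • g k)
    (G c R : ℝ) (hG : 0 < G) (hc : 0 < c) (hR : 0 < R)
    (hgbdd : ∀ k, ‖g k‖ ≤ G)
    (hip : ∀ k, c * ‖gradient F (w k)‖ ^ 2 ≤ ⟪g k, gradient F (w k)⟫)
    (hwbdd : ∀ k, ‖w k‖ ≤ R) :
    Filter.Tendsto (fun k => gradient F (w k)) Filter.atTop (nhds 0) := by
  classical
  set L' : ℝ := max L 1 with hL'def
  have hL'pos : (0 : ℝ) < L' := lt_of_lt_of_le one_pos (le_max_right _ _)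
  have hLip' : ∀ x y : EuclideanSpace ℝ (Fin d),
      ‖gradient F x - gradient F y‖ ≤ L' * ‖x - y‖ := fun x y =>
    le_trans (hLip x y) (mul_le_mul_of_nonneg_right (le_max_left _ _) (norm_nonneg _))
  set a : ℕ → ℝ := fun k => ‖gradient F (w k)‖ ^ 2 with hadef
  have hanneg : ∀ k, 0 ≤ a k := fun k => sq_nonneg _
  -- Step 1: descent inequality per step
  have hdesc : ∀ k, c * (η k * a k)
      ≤ F (w k) - F (w (k + 1)) + (L' / 2 * G ^ 2) * η k ^ 2 := by
    intro k
    have h := licm_descent F L' hL'pos.le hF hLip' (w k) (-(η k • g k))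
    have hw : w (k + 1) = w k + -(η k • g k) := by rw [hupd k, sub_eq_add_neg]
    rw [← hw] at h
    have hinner : ⟪gradient F (w k), -(η k • g k)⟫
        = -(η k * ⟪g k, gradient F (w k)⟫) := by
      rw [inner_neg_right, real_inner_smul_right, real_inner_comm]
    have hnorm : ‖-(η k • g k)‖ ^ 2 = η k ^ 2 * ‖g k‖ ^ 2 := by
      rw [norm_neg, norm_smul, Real.norm_eq_abs, mul_pow, sq_abs]
    rw [hinner, hnorm] at h
    have h1 : η k * (c * a k) ≤ η k * ⟪g k, gradient F (w k)⟫ :=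
      mul_le_mul_of_nonneg_left (hip k) (hηpos k).le
    have h2 : ‖g k‖ ^ 2 ≤ G ^ 2 := by
      have := hgbdd k
      nlinarith [norm_nonneg (g k)]
    have h3 : L' / 2 * (η k ^ 2 * ‖g k‖ ^ 2) ≤ L' / 2 * (η k ^ 2 * G ^ 2) := by
      apply mul_le_mul_of_nonneg_left _ (by positivity)
      exact mul_le_mul_of_nonneg_left h2 (sq_nonneg _)
    nlinarith
  -- Step 2: summability of η_k a_k
  obtain ⟨B, hB⟩ := hbdd
  have hBle : ∀ x, B ≤ F x := fun x => hB (Set.mem_range_self x)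
  have hsqle : ∀ n, ∑ k ∈ Finset.range n, η k ^ 2 ≤ ∑' k, η k ^ 2 := fun n =>
    Summable.sum_le_tsum _ (fun k _ => sq_nonneg _) hsq
  have hbound : ∀ n, ∑ k ∈ Finset.range n, c * (η k * a k)
      ≤ F (w 0) - B + (L' / 2 * G ^ 2) * ∑' k, η k ^ 2 := by
    intro n
    have h1 : ∑ k ∈ Finset.range n, c * (η k * a k)
        ≤ ∑ k ∈ Finset.range n,
          ((F (w k) - F (w (k + 1))) + (L' / 2 * G ^ 2) * η k ^ 2) :=
      Finset.sum_le_sum fun k _ => hdesc k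
    rw [Finset.sum_add_distrib, Finset.sum_range_sub' (fun k => F (w k))] at h1
    have e1 : ∑ k ∈ Finset.range n, c * (η k * a k)
        = c * ∑ k ∈ Finset.range n, η k * a k := by rw [Finset.mul_sum]
    have e2 : ∑ k ∈ Finset.range n, (L' / 2 * G ^ 2) * η k ^ 2
        = (L' / 2 * G ^ 2) * ∑ k ∈ Finset.range n, η k ^ 2 := by rw [Finset.mul_sum]
    have h2 : (L' / 2 * G ^ 2) * ∑ k ∈ Finset.range n, η k ^ 2
        ≤ (L' / 2 * G ^ 2) * ∑' k, η k ^ 2 :=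
      mul_le_mul_of_nonneg_left (hsqle n) (by positivity)
    have h3 := hBle (w n)
    linarith
  have hsummable : Summable (fun k => c * (η k * a k)) :=
    summable_of_sum_range_le
      (fun k => mul_nonneg hc.le (mul_nonneg (hηpos k).le (hanneg k))) hbound
  have hsum : Summable (fun k => η k * a k) := by
    have heq : (fun k => η k * a k) = fun k => c⁻¹ * (c * (η k * a k)) := by
      funext k; field_simp
    rw [heq]
    exact hsummable.mul_left _
  -- Step 3: uniform bound on gradient norms
  set M : ℝ := ‖gradient F (w 0)‖ + L' * (2 * R) with hMdef
  have hMnonneg : 0 ≤ M := by positivity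
  have hM : ∀ k, ‖gradient F (w k)‖ ≤ M := by
    intro k
    have h1 := norm_sub_norm_le (gradient F (w k)) (gradient F (w 0))
    have h2 := hLip' (w k) (w 0)
    have h3 := norm_sub_le (w k) (w 0)
    have h4 := hwbdd k
    have h5 := hwbdd 0
    have h6 : L' * ‖w k - w 0‖ ≤ L' * (2 * R) := by
      apply mul_le_mul_of_nonneg_left _ hL'pos.le
      linarith
    rw [hMdef]; linarith
  -- Step 4: increments of a are controlled by η
  set C : ℝ := 2 * M * L' * G + 1 with hCdef
  have hCpos : 0 < C := by positivity
  have hstep : ∀ k, |a (k + 1) - a k| ≤ C * η k := by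
    intro k
    set u := gradient F (w (k + 1))
    set v := gradient F (w k)
    have habs : |a (k + 1) - a k| = |‖u‖ - ‖v‖| * (‖u‖ + ‖v‖) := by
      have h1 : a (k + 1) - a k = (‖u‖ - ‖v‖) * (‖u‖ + ‖v‖) := by
        rw [hadef]; ring
      rw [h1, abs_mul, abs_of_nonneg (by positivity : (0:ℝ) ≤ ‖u‖ + ‖v‖)]
    have h1 : |‖u‖ - ‖v‖| ≤ ‖u - v‖ := abs_norm_sub_norm_le u v
    have h2 : ‖u - v‖ ≤ L' * (η k * G) := by
      have hw : w (k + 1) - w k = -(η k • g k) := by rw [hupd k]; abel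
      have := hLip' (w (k + 1)) (w k)
      rw [hw, norm_neg, norm_smul, Real.norm_eq_abs, abs_of_pos (hηpos k)] at this
      calc ‖u - v‖ ≤ L' * (η k * ‖g k‖) := this
        _ ≤ L' * (η k * G) := by
            apply mul_le_mul_of_nonneg_left _ hL'pos.le
            exact mul_le_mul_of_nonneg_left (hgbdd k) (hηpos k).le
    have h3 : ‖u‖ + ‖v‖ ≤ 2 * M := by
      have := hM (k + 1); have := hM k; simp only [u, v] at *; linarith [hM (k+1), hM k]
    rw [habs]
    have h4 : |‖u‖ - ‖v‖| * (‖u‖ + ‖v‖) ≤ (L' * (η k * G)) * (2 * M) := by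
      exact mul_le_mul (h1.trans h2) h3 (by positivity)
        (mul_nonneg hL'pos.le (mul_nonneg (hηpos k).le hG.le))
    have h5 : (L' * (η k * G)) * (2 * M) ≤ C * η k := by
      rw [hCdef]; nlinarith [hηpos k]
    linarith
  -- Step 5: conclude via the Robbins–Monro lemma
  have ha0 : Filter.Tendsto a Filter.atTop (nhds 0) :=
    licm_robbins η a hηpos hanneg hdiv hsum C hCpos hstep
  rw [tendsto_zero_iff_norm_tendsto_zero]
  have heqn : (fun k => ‖gradient F (w k)‖) = fun k => Real.sqrt (a k) := by
    funext k
    rw [hadef, Real.sqrt_sq (norm_nonneg _)]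
  rw [heqn]
  have := (Real.continuous_sqrt.tendsto 0).comp ha0
  simpa [Function.comp_def] using this
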